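/- Let n ≥ 1 be a natural number, p ∈ (0,1), q = 1 − p, and μ₁, μ₀, σ₁², σ₀² real numbers with σ₁², σ₀² ≥ 0. Let (Ω, 𝔉, μ) be a probability space, A : Ω → ℕ a random variable following the binomial distribution Bin(n, p), and set N₁ = 1 + A, N₀ = n + 1 − A. Let T be a square-integrable real random variable such that almost surely E[T ∣ σ(A)] = μ₁ − μ₀ and E[(T − E[T ∣ σ(A)])² ∣ σ(A)] = σ₁²/N₁ + σ₀²/N₀. Then Var(T) = σ₁² (1 − q^(n+1)) / ((n + 1) p) + σ₀² (1 − p^(n+1)) / ((n + 1) q). -/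

import Mathlib

open MeasureTheory ProbabilityTheory

lemma binom_inv_sum (n : ℕ) (p q : ℝ) (hp : 0 < p) (hpq : p + q = 1) :
    ∑ k ∈ Finset.range (n + 1), (n.choose k : ℝ) * p ^ k * q ^ (n - k) / ((k : ℝ) + 1)
      = (1 - q ^ (n + 1)) / (((n : ℝ) + 1) * p) := by
  have h1 : ∀ k ∈ Finset.range (n + 1),
      (n.choose k : ℝ) * p ^ k * q ^ (n - k) / ((k : ℝ) + 1)
        = ((n + 1).choose (k + 1) : ℝ) * p ^ (k + 1) * q ^ ((n + 1) - (k + 1))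
            / (((n : ℝ) + 1) * p) := by
    intro k hk
    have hcast : ((n : ℝ) + 1) * (n.choose k : ℝ)
        = ((n + 1).choose (k + 1) : ℝ) * ((k : ℝ) + 1) := by
      exact_mod_cast congrArg (Nat.cast : ℕ → ℝ) (Nat.add_one_mul_choose_eq n k)
    have hk1 : (0:ℝ) < (k : ℝ) + 1 := by positivity
    have hn1 : (0:ℝ) < ((n : ℝ) + 1) * p := by positivity
    rw [div_eq_div_iff hk1.ne' hn1.ne']
    have hsub : (n + 1) - (k + 1) = n - k := by omega
    rw [hsub, pow_succ]
    linear_combination (p ^ k * p * q ^ (n - k)) * hcast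
  rw [Finset.sum_congr rfl h1, ← Finset.sum_div]
  congr 1
  have := add_pow p q (n + 1)
  rw [hpq, one_pow] at this
  have hsum : ∑ k ∈ Finset.range (n + 2), p ^ k * q ^ (n + 1 - k) * ((n+1).choose k : ℝ) = 1 :=
    this.symm
  rw [Finset.sum_range_succ'] at hsum
  simp only [Nat.sub_zero, pow_zero, one_mul, Nat.choose_zero_right, Nat.cast_one, mul_one] at hsum
  have : ∑ k ∈ Finset.range (n + 1),
      ((n + 1).choose (k + 1) : ℝ) * p ^ (k + 1) * q ^ ((n + 1) - (k + 1))
      = ∑ k ∈ Finset.range (n + 1), p ^ (k + 1) * q ^ (n + 1 - (k + 1)) * ((n+1).choose (k+1) : ℝ) := by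
    apply Finset.sum_congr rfl; intro k _; ring
  rw [this]
  linarith [hsum]

lemma binom_inv_sum' (n : ℕ) (p q : ℝ) (hq : 0 < q) (hpq : p + q = 1) :
    ∑ k ∈ Finset.range (n + 1), (n.choose k : ℝ) * p ^ k * q ^ (n - k) / ((n : ℝ) + 1 - (k : ℝ))
      = (1 - p ^ (n + 1)) / (((n : ℝ) + 1) * q) := by
  have key := binom_inv_sum n q p hq (by linarith)
  rw [← Finset.sum_range_reflect] at key
  rw [← key]
  apply Finset.sum_congr rfl
  intro k hk
  have hkn : k ≤ n := by
    simp only [Finset.mem_range] at hk; omega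
  have h1 : n + 1 - 1 - k = n - k := by omega
  rw [h1, Nat.choose_symm hkn]
  have h2 : n - (n - k) = k := by omega
  rw [h2]
  have h3 : ((n - k : ℕ) : ℝ) + 1 = (n : ℝ) + 1 - (k : ℝ) := by
    have : ((n - k : ℕ) : ℝ) = (n : ℝ) - (k : ℝ) := by
      exact Nat.cast_sub hkn
    rw [this]; ring
  rw [h3]
  ring

lemma integral_fun_of_nat_rv {Ω : Type*} [MeasurableSpace Ω] (μ : Measure Ω)
    [IsProbabilityMeasure μ] (A : Ω → ℕ) (hA : Measurable A) (n : ℕ)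
    (hAle : ∀ ω, A ω ≤ n) (g : ℕ → ℝ) :
    ∫ ω, g (A ω) ∂μ
      = ∑ k ∈ Finset.range (n + 1), (μ {ω | A ω = k}).toReal * g k := by
  have hmeas : ∀ k : ℕ, MeasurableSet {ω | A ω = k} := fun k =>
    hA (measurableSet_singleton k)
  have hpt : ∀ ω, g (A ω)
      = ∑ k ∈ Finset.range (n + 1), Set.indicator {ω' | A ω' = k} (fun _ => g k) ω := by
    intro ω
    rw [Finset.sum_eq_single_of_mem (A ω) (Finset.mem_range.2 (Nat.lt_succ_of_le (hAle ω)))]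
    · simp [Set.indicator_apply]
    · intro k _ hk
      simp [Set.indicator_apply, fun h : A ω = k => hk h.symm]
      intro h; exact absurd h.symm hk
  simp_rw [hpt]
  rw [integral_finset_sum]
  · apply Finset.sum_congr rfl
    intro k _
    rw [integral_indicator_const _ (hmeas k)]
    simp [mul_comm]
    exact Or.inl rfl
  · intro k _
    exact (integrable_const (g k)).indicator (hmeas k)

/-- Law-of-total-variance computation for the estimated-propensity-score IPW stratum
estimator.  Let `A ~ Bin(n, p)` on a probability space `(Ω, 𝔉, μ)`, and let
`N₁ = 1 + A`, `N₀ = n + 1 - A`.  If `T` is square-integrable with a.s. conditional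
mean `μ₁ - μ₀` and a.s. conditional variance `σ₁²/N₁ + σ₀²/N₀` given `σ(A)`, then
`Var(T) = σ₁² (1 - q^(n+1))/((n+1) p) + σ₀² (1 - p^(n+1))/((n+1) q)`. -/
theorem variance_estimated_ps_ipw (n : ℕ) (hn : 1 ≤ n) (p q : ℝ)
    (hp0 : 0 < p) (hp1 : p < 1) (hq : q = 1 - p)
    (μ₁ μ₀ σ₁sq σ₀sq : ℝ) (hσ₁ : 0 ≤ σ₁sq) (hσ₀ : 0 ≤ σ₀sq)
    (Ω : Type*) [MeasurableSpace Ω] (μ : Measure Ω) [IsProbabilityMeasure μ]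
    (A : Ω → ℕ) (hA : Measurable A) (hAle : ∀ ω, A ω ≤ n)
    (hAdist : ∀ k ≤ n, μ {ω | A ω = k}
      = ENNReal.ofReal ((n.choose k : ℝ) * p ^ k * (1 - p) ^ (n - k)))
    (T : Ω → ℝ) (hT : MemLp T 2 μ)
    (hcondmean : ∀ᵐ ω ∂μ,
      (μ[T | MeasurableSpace.comap A ⊤]) ω = μ₁ - μ₀)
    (hcondvar : ∀ᵐ ω ∂μ,
      (μ[(fun ω' => (T ω' - (μ[T | MeasurableSpace.comap A ⊤]) ω') ^ 2) |
          MeasurableSpace.comap A ⊤]) ω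
        = σ₁sq / (1 + (A ω : ℝ)) + σ₀sq / ((n : ℝ) + 1 - (A ω : ℝ))) :
    variance T μ
      = σ₁sq * (1 - q ^ (n + 1)) / (((n : ℝ) + 1) * p)
        + σ₀sq * (1 - p ^ (n + 1)) / (((n : ℝ) + 1) * q) := by
  have hq0 : 0 < q := by rw [hq]; linarith
  have hpq : p + q = 1 := by rw [hq]; ring
  have hm : MeasurableSpace.comap A ⊤ ≤ ‹MeasurableSpace Ω› := hA.comap_le
  haveI : SigmaFinite (μ.trim hm) := inferInstance
  have hTi : Integrable T μ := hT.integrable one_le_two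
  -- mean of T
  have hET : μ[T] = μ₁ - μ₀ := by
    rw [← integral_condExp hm, integral_congr_ae hcondmean]
    simp
  -- variance as integral
  have hvar : variance T μ = ∫ ω, (T ω - (μ₁ - μ₀)) ^ 2 ∂μ := by
    rw [variance_eq_integral hT.aestronglyMeasurable.aemeasurable, hET]
  -- replace constant by conditional mean
  have h1 : (fun ω => (T ω - (μ₁ - μ₀)) ^ 2)
      =ᵐ[μ] fun ω => (T ω - (μ[T | MeasurableSpace.comap A ⊤]) ω) ^ 2 := by
    filter_upwards [hcondmean] with ω hω
    rw [hω]
  have h2 : ∫ ω, (T ω - (μ₁ - μ₀)) ^ 2 ∂μ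
      = ∫ ω, (σ₁sq / (1 + (A ω : ℝ)) + σ₀sq / ((n : ℝ) + 1 - (A ω : ℝ))) ∂μ := by
    rw [integral_congr_ae h1, ← integral_condExp (f := fun ω' =>
      (T ω' - (μ[T | MeasurableSpace.comap A ⊤]) ω') ^ 2) hm,
      integral_congr_ae hcondvar]
  -- compute the integral of the function of A
  set g : ℕ → ℝ := fun k => σ₁sq / (1 + (k : ℝ)) + σ₀sq / ((n : ℝ) + 1 - (k : ℝ)) with hg
  have h3 : ∫ ω, (σ₁sq / (1 + (A ω : ℝ)) + σ₀sq / ((n : ℝ) + 1 - (A ω : ℝ))) ∂μ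
      = ∑ k ∈ Finset.range (n + 1), (μ {ω | A ω = k}).toReal * g k :=
    integral_fun_of_nat_rv μ A hA n hAle g
  have h4 : ∑ k ∈ Finset.range (n + 1), (μ {ω | A ω = k}).toReal * g k
      = ∑ k ∈ Finset.range (n + 1),
          ((n.choose k : ℝ) * p ^ k * q ^ (n - k)) * g k := by
    apply Finset.sum_congr rfl
    intro k hk
    have hkn : k ≤ n := by simp only [Finset.mem_range] at hk; omega
    rw [hAdist k hkn, ENNReal.toReal_ofReal, hq]
    exact mul_nonneg (mul_nonneg (Nat.cast_nonneg _) (pow_pos hp0 _).le)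
      (pow_nonneg (by linarith) _)
  have h5 : ∑ k ∈ Finset.range (n + 1),
        ((n.choose k : ℝ) * p ^ k * q ^ (n - k)) * g k
      = σ₁sq * ∑ k ∈ Finset.range (n + 1),
          (n.choose k : ℝ) * p ^ k * q ^ (n - k) / ((k : ℝ) + 1)
        + σ₀sq * ∑ k ∈ Finset.range (n + 1),
          (n.choose k : ℝ) * p ^ k * q ^ (n - k) / ((n : ℝ) + 1 - (k : ℝ)) := by
    rw [Finset.mul_sum, Finset.mul_sum, ← Finset.sum_add_distrib]
    apply Finset.sum_congr rfl
    intro k _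
    simp only [hg]
    have : 1 + (k : ℝ) = (k : ℝ) + 1 := by ring
    rw [this]
    ring
  rw [hvar, h2, h3, h4, h5, binom_inv_sum n p q hp0 hpq, binom_inv_sum' n p q hq0 hpq,
    mul_div_assoc, mul_div_assoc]
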